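/- For every finite directed graph G with all self-loops on a finite vertex set V, the chain of inequalities ι(G) ≤ ν₂(G) ≤ λ(G) ≤ κ(G) holds, where ι(G) is the independence number, ν₂(G) is defined below, λ(G) is the maximum acyclic subgraph number, and κ(G) is the clique covering number. -/

import Mathlib

open Finset

/-- The independence number `ι(G)`: the largest `r` such that there are `r` distinct
vertices with no edge between any two distinct ones. -/
noncomputable def indepNumber {V : Type*} [Fintype V] (adj : V → V → Prop) : ℕ :=
  sSup {r : ℕ | ∃ f : Fin r → V, Function.Injective f ∧
    ∀ i j : Fin r, i ≠ j → ¬ adj (f i) (f j)}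

/-- The maximum acyclic subgraph number `λ(G)`. -/
noncomputable def acyclicNumber {V : Type*} [Fintype V] (adj : V → V → Prop) : ℕ :=
  sSup {r : ℕ | ∃ f : Fin r → V, Function.Injective f ∧
    ∀ i j : Fin r, j < i → ¬ adj (f i) (f j)}

/-- The clique covering number `κ(G)`: the least `r` such that the vertices can be
labelled by `Fin r` with every pair of equally-labelled vertices joined by an edge
(equivalently, the least size of a partition of `V` into subcliques). -/
noncomputable def cliqueCoverNumber {V : Type*} [Fintype V] (adj : V → V → Prop) : ℕ :=
  sInf {r : ℕ | ∃ P : V → Fin r, ∀ u v, P u = P v → adj u v}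

/-- The quantity `ν₂(G)`: the supremum over positive vertex weightings `f` summing to 1 of
`(∑_v f v / √(∑_{w ∈ I(v)} f w))²`. -/
noncomputable def nuTwo {V : Type*} [Fintype V] (adj : V → V → Prop) [DecidableRel adj] : ℝ :=
  sSup {x : ℝ | ∃ f : V → ℝ, (∀ v, 0 < f v) ∧ (∑ v, f v) = 1 ∧
    x = (∑ v, f v / Real.sqrt (∑ w ∈ Finset.univ.filter (fun w => adj w v), f w)) ^ 2}


open Filter

section
set_option linter.unusedSectionVars false
variable {V : Type*} [Fintype V] [DecidableEq V] (adj : V → V → Prop) [DecidableRel adj]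

variable {V : Type*} [Fintype V] [DecidableEq V] (adj : V → V → Prop) [DecidableRel adj]

lemma caro_wei (hrefl : ∀ v, adj v v) (f : V → ℝ) (hf : ∀ v, 0 < f v) (S : Finset V) :
    ∃ (r : ℕ) (g : Fin r → V), Function.Injective g ∧ (∀ i, g i ∈ S) ∧
      (∀ i j : Fin r, j < i → ¬ adj (g i) (g j)) ∧
      ∑ v ∈ S, f v / (∑ w ∈ S.filter (fun w => adj w v), f w) ≤ (r : ℝ) := by
  induction S using Finset.strongInduction with
  | _ S ih =>
    rcases S.eq_empty_or_nonempty with rfl | hS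
    · exact ⟨0, Fin.elim0, fun i => i.elim0, fun i => i.elim0, fun i => i.elim0, by simp⟩
    · set w : V → ℝ := fun v => ∑ x ∈ S.filter (fun x => adj x v), f x with hw
      obtain ⟨v₀, hv₀S, hmin⟩ := S.exists_min_image w hS
      set N : Finset V := S.filter (fun x => adj x v₀) with hN
      have hv₀N : v₀ ∈ N := mem_filter.2 ⟨hv₀S, hrefl v₀⟩
      have hNS : N ⊆ S := filter_subset _ _
      set T : Finset V := S \ N with hT
      have hTsub : T ⊂ S := by
        refine Finset.sdiff_ssubset ?_ ⟨v₀, hv₀N⟩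
        exact hNS
      obtain ⟨r, g, hinj, hmem, hback, hsum⟩ := ih T hTsub
      have hv₀notT : v₀ ∉ T := by simp [hT, hv₀N]
      -- positivity of denominators
      have hwpos : ∀ v ∈ S, 0 < w v := fun v hv =>
        Finset.sum_pos (fun x _ => hf x) ⟨v, mem_filter.2 ⟨hv, hrefl v⟩⟩
      refine ⟨r + 1, Fin.cons v₀ g, ?_, ?_, ?_, ?_⟩
      · rw [Fin.cons_injective_iff]
        exact ⟨fun ⟨i, hi⟩ => hv₀notT (hi ▸ hmem i), hinj⟩
      · intro i
        rcases Fin.eq_zero_or_eq_succ i with rfl | ⟨j, rfl⟩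
        · simpa using hv₀S
        · simpa using (Finset.sdiff_subset : T ⊆ S) (hmem j)
      · intro i j hij
        rcases Fin.eq_zero_or_eq_succ i with rfl | ⟨i', rfl⟩
        · exact absurd hij (by simp)
        rcases Fin.eq_zero_or_eq_succ j with rfl | ⟨j', rfl⟩
        · simp only [Fin.cons_succ, Fin.cons_zero]
          intro hadj
          have : g i' ∈ N := mem_filter.2 ⟨(Finset.sdiff_subset) (hmem i'), hadj⟩
          have := hmem i'
          rw [hT] at this; have := Finset.mem_sdiff.1 this
          exact this.2 ‹g i' ∈ N›
        · simp only [Fin.cons_succ]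
          exact hback i' j' (by rwa [Fin.succ_lt_succ_iff] at hij)
      · have hsplit : ∑ v ∈ S, f v / w v = (∑ v ∈ T, f v / w v) + ∑ v ∈ N, f v / w v :=
          (Finset.sum_sdiff hNS).symm
        have hNbound : ∑ v ∈ N, f v / w v ≤ 1 := by
          have h1 : ∑ v ∈ N, f v / w v ≤ ∑ v ∈ N, f v / w v₀ := by
            refine Finset.sum_le_sum fun v hv => ?_
            have hvS := hNS hv
            exact div_le_div_of_nonneg_left (hf v).le (hwpos v₀ hv₀S) (hmin v hvS)
          have h2 : ∑ v ∈ N, f v / w v₀ = 1 := by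
            rw [← Finset.sum_div, hw]
            exact div_self (hwpos v₀ hv₀S).ne'
          linarith
        have hTbound : ∑ v ∈ T, f v / w v ≤ (r : ℝ) := by
          refine le_trans (Finset.sum_le_sum fun v hv => ?_) hsum
          have hvT : 0 < ∑ x ∈ T.filter (fun x => adj x v), f x :=
            Finset.sum_pos (fun x _ => hf x) ⟨v, mem_filter.2 ⟨hv, hrefl v⟩⟩
          refine div_le_div_of_nonneg_left (hf v).le hvT ?_
          exact Finset.sum_le_sum_of_subset_of_nonneg
            (filter_subset_filter _ Finset.sdiff_subset) (fun x _ _ => (hf x).le)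
        push_cast
        rw [hsplit]
        linarith

variable {V : Type*} [Fintype V] [DecidableEq V] (adj : V → V → Prop) [DecidableRel adj]

lemma acyclic_bddAbove : BddAbove {r : ℕ | ∃ f : Fin r → V, Function.Injective f ∧
    ∀ i j : Fin r, j < i → ¬ adj (f i) (f j)} :=
  ⟨Fintype.card V, fun r ⟨f, hf, _⟩ => by simpa using Fintype.card_le_of_injective f hf⟩

lemma indep_bddAbove : BddAbove {r : ℕ | ∃ f : Fin r → V, Function.Injective f ∧
    ∀ i j : Fin r, i ≠ j → ¬ adj (f i) (f j)} :=
  ⟨Fintype.card V, fun r ⟨f, hf, _⟩ => by simpa using Fintype.card_le_of_injective f hf⟩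


/-- every element of the nuTwo set is at most λ -/
lemma nu_elem_le (hrefl : ∀ v, adj v v) {x : ℝ}
    (hx : x ∈ {x : ℝ | ∃ f : V → ℝ, (∀ v, 0 < f v) ∧ (∑ v, f v) = 1 ∧
      x = (∑ v, f v / Real.sqrt (∑ w ∈ Finset.univ.filter (fun w => adj w v), f w)) ^ 2}) :
    x ≤ ((sSup {r : ℕ | ∃ f : Fin r → V, Function.Injective f ∧
      ∀ i j : Fin r, j < i → ¬ adj (f i) (f j)} : ℕ) : ℝ) := by
  obtain ⟨f, hf, hsum1, rfl⟩ := hx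
  obtain ⟨r, g, hinj, _, hback, hsum⟩ := caro_wei adj hrefl f hf Finset.univ
  set den : V → ℝ := fun v => ∑ w ∈ Finset.univ.filter (fun w => adj w v), f w with hden
  have hdpos : ∀ v, 0 < den v := fun v =>
    Finset.sum_pos (fun x _ => hf x) ⟨v, mem_filter.2 ⟨mem_univ v, hrefl v⟩⟩
  have hCS : (∑ v, f v / Real.sqrt (den v)) ^ 2 ≤ (∑ v, f v) * ∑ v, f v / den v := by
    have := Finset.sum_mul_sq_le_sq_mul_sq Finset.univ (fun v => Real.sqrt (f v))
      (fun v => Real.sqrt (f v) / Real.sqrt (den v))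
    have e1 : ∀ v : V, Real.sqrt (f v) * (Real.sqrt (f v) / Real.sqrt (den v))
        = f v / Real.sqrt (den v) := by
      intro v
      rw [mul_div_assoc', Real.mul_self_sqrt (hf v).le]
    have e2 : ∀ v : V, Real.sqrt (f v) ^ 2 = f v := fun v => Real.sq_sqrt (hf v).le
    have e3 : ∀ v : V, (Real.sqrt (f v) / Real.sqrt (den v)) ^ 2 = f v / den v := by
      intro v
      rw [div_pow, Real.sq_sqrt (hf v).le, Real.sq_sqrt (hdpos v).le]
    calc (∑ v, f v / Real.sqrt (den v)) ^ 2
        = (∑ v, Real.sqrt (f v) * (Real.sqrt (f v) / Real.sqrt (den v))) ^ 2 := by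
          simp_rw [e1]
      _ ≤ (∑ v, Real.sqrt (f v) ^ 2) * ∑ v, (Real.sqrt (f v) / Real.sqrt (den v)) ^ 2 := this
      _ = (∑ v, f v) * ∑ v, f v / den v := by simp_rw [e2, e3]
  have hrmem : r ≤ sSup {r : ℕ | ∃ f : Fin r → V, Function.Injective f ∧
      ∀ i j : Fin r, j < i → ¬ adj (f i) (f j)} :=
    le_csSup (acyclic_bddAbove adj) ⟨g, hinj, hback⟩
  calc (∑ v, f v / Real.sqrt (den v)) ^ 2 ≤ (∑ v, f v) * ∑ v, f v / den v := hCS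
    _ = ∑ v, f v / den v := by rw [hsum1, one_mul]
    _ ≤ (r : ℝ) := hsum
    _ ≤ _ := by exact_mod_cast hrmem

/-- λ ≤ κ -/
lemma lam_le_kappa (hrefl : ∀ v, adj v v) :
    sSup {r : ℕ | ∃ f : Fin r → V, Function.Injective f ∧
      ∀ i j : Fin r, j < i → ¬ adj (f i) (f j)} ≤
    sInf {r : ℕ | ∃ P : V → Fin r, ∀ u v, P u = P v → adj u v} := by
  have hkne : {r : ℕ | ∃ P : V → Fin r, ∀ u v, P u = P v → adj u v}.Nonempty :=
    ⟨Fintype.card V, Fintype.equivFin V, fun u v h => by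
      have := (Fintype.equivFin V).injective h; subst this; exact hrefl u⟩
  refine le_csInf hkne fun k ⟨P, hP⟩ => ?_
  have hne : {r : ℕ | ∃ f : Fin r → V, Function.Injective f ∧
      ∀ i j : Fin r, j < i → ¬ adj (f i) (f j)}.Nonempty :=
    ⟨0, Fin.elim0, fun i => i.elim0, fun i => i.elim0⟩
  obtain ⟨g, hinj, hback⟩ := Nat.sSup_mem hne (acyclic_bddAbove adj)
  have : Function.Injective (P ∘ g) := by
    intro i j h
    by_contra hne'
    rcases lt_or_gt_of_ne hne' with hlt | hlt
    · exact hback j i hlt (hP _ _ (h.symm))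
    · exact hback i j hlt (hP _ _ h)
  simpa using Fintype.card_le_of_injective _ this

variable {V : Type*} [Fintype V] [DecidableEq V] (adj : V → V → Prop) [DecidableRel adj]

set_option maxHeartbeats 1000000 in
lemma indep_weight (hrefl : ∀ v, adj v v) {r : ℕ} (e : Fin r → V)
    (he : Function.Injective e) (hind : ∀ i j : Fin r, i ≠ j → ¬ adj (e i) (e j))
    (hr : 0 < r) {δ : ℝ} (hδ : 0 < δ) :
    ∃ x ∈ {x : ℝ | ∃ f : V → ℝ, (∀ v, 0 < f v) ∧ (∑ v, f v) = 1 ∧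
      x = (∑ v, f v / Real.sqrt (∑ w ∈ Finset.univ.filter (fun w => adj w v), f w)) ^ 2},
      (r : ℝ)^2 / (((r:ℝ) + ((Finset.univ \ Finset.image e Finset.univ).card : ℝ) * δ)
        * (1 + ((Finset.univ \ Finset.image e Finset.univ).card : ℝ) * δ)) ≤ x := by
  set R : Finset V := Finset.image e Finset.univ with hR
  set m : ℕ := (Finset.univ \ R).card with hm
  have hRcard : R.card = r := by
    rw [hR, Finset.card_image_of_injective _ he]; simp
  set u : V → ℝ := fun v => if v ∈ R then 1 else δ with hu
  have hupos : ∀ v, 0 < u v := by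
    intro v; by_cases h : v ∈ R <;> simp [hu, h, hδ]
  set Z : ℝ := ∑ v, u v with hZdef
  have hZ : Z = (r : ℝ) + (m : ℝ) * δ := by
    rw [hZdef, ← Finset.sum_sdiff (Finset.subset_univ R)]
    have h1 : ∑ v ∈ R, u v = (r : ℝ) := by
      rw [Finset.sum_congr rfl (fun v hv => if_pos hv), Finset.sum_const, hRcard,
        nsmul_eq_mul, mul_one]
    have h2 : ∑ v ∈ Finset.univ \ R, u v = (m : ℝ) * δ := by
      rw [Finset.sum_congr rfl (fun v hv => if_neg (Finset.mem_sdiff.1 hv).2),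
        Finset.sum_const, nsmul_eq_mul]
    rw [h1, h2]; ring
  have hZpos : 0 < Z := by
    rw [hZ]
    have : (1:ℝ) ≤ (r:ℝ) := by exact_mod_cast hr
    nlinarith [mul_nonneg (Nat.cast_nonneg m : (0:ℝ) ≤ m) hδ.le]
  set f : V → ℝ := fun v => u v / Z with hf
  have hfpos : ∀ v, 0 < f v := fun v => div_pos (hupos v) hZpos
  have hsum1 : ∑ v, f v = 1 := by
    rw [hf]; simp only; rw [← Finset.sum_div, ← hZdef, div_self hZpos.ne']
  set den : V → ℝ := fun v => ∑ w ∈ Finset.univ.filter (fun w => adj w v), f w with hden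
  have hdpos : ∀ v, 0 < den v := fun v =>
    Finset.sum_pos (fun x _ => hfpos x) ⟨v, mem_filter.2 ⟨mem_univ v, hrefl v⟩⟩
  set B : ℝ := (1 + (m:ℝ) * δ) / Z with hB
  have hBpos : 0 < B := by
    apply div_pos _ hZpos
    nlinarith [mul_nonneg (Nat.cast_nonneg m : (0:ℝ) ≤ m) hδ.le]
  -- denominator bound for v ∈ R
  have hdb : ∀ v ∈ R, den v ≤ B := by
    intro v hv
    have hsub : Finset.univ.filter (fun w => adj w v) ⊆ insert v (Finset.univ \ R) := by
      intro w hw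
      rw [Finset.mem_filter] at hw
      by_cases hwR : w ∈ R
      · obtain ⟨j, _, rfl⟩ := Finset.mem_image.1 hwR
        obtain ⟨i, _, rfl⟩ := Finset.mem_image.1 hv
        rcases eq_or_ne j i with rfl | hne
        · exact Finset.mem_insert_self _ _
        · exact absurd hw.2 (hind j i hne)
      · exact Finset.mem_insert_of_mem (Finset.mem_sdiff.2 ⟨mem_univ w, hwR⟩)
    have hvnot : v ∉ Finset.univ \ R := by simp [Finset.mem_sdiff, hv]
    calc den v ≤ ∑ w ∈ insert v (Finset.univ \ R), f w :=
          Finset.sum_le_sum_of_subset_of_nonneg hsub (fun x _ _ => (hfpos x).le)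
      _ = f v + ∑ w ∈ Finset.univ \ R, f w := Finset.sum_insert hvnot
      _ = B := by
          have h1 : f v = 1 / Z := by rw [hf]; simp only; rw [hu]; simp [hv]
          have h2 : ∑ w ∈ Finset.univ \ R, f w = (m:ℝ) * δ / Z := by
            rw [hf]; simp only; rw [← Finset.sum_div]
            congr 1
            rw [Finset.sum_congr rfl (fun w hw => if_neg (Finset.mem_sdiff.1 hw).2),
              Finset.sum_const, nsmul_eq_mul]
          rw [h1, h2, hB]; ring
  -- term lower bound on R
  have hterm : ∀ v ∈ R, (1 / Z) / Real.sqrt B ≤ f v / Real.sqrt (den v) := by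
    intro v hv
    have h1 : f v = 1 / Z := by rw [hf]; simp only; rw [hu]; simp [hv]
    rw [h1]
    apply div_le_div_of_nonneg_left (by positivity) (Real.sqrt_pos.2 (hdpos v))
    exact Real.sqrt_le_sqrt (hdb v hv)
  have hsumlb : (r : ℝ) * ((1 / Z) / Real.sqrt B) ≤ ∑ v, f v / Real.sqrt (den v) := by
    calc (r : ℝ) * ((1 / Z) / Real.sqrt B)
        = ∑ _v ∈ R, (1 / Z) / Real.sqrt B := by
          rw [Finset.sum_const, hRcard, nsmul_eq_mul]
      _ ≤ ∑ v ∈ R, f v / Real.sqrt (den v) := Finset.sum_le_sum hterm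
      _ ≤ ∑ v, f v / Real.sqrt (den v) :=
          Finset.sum_le_sum_of_subset_of_nonneg (Finset.subset_univ R)
            (fun x _ _ => div_nonneg (hfpos x).le (Real.sqrt_nonneg _))
  refine ⟨_, ⟨f, hfpos, hsum1, rfl⟩, ?_⟩
  have hlb0 : 0 ≤ (r : ℝ) * ((1 / Z) / Real.sqrt B) := by positivity
  have hsq : ((r : ℝ) * ((1 / Z) / Real.sqrt B)) ^ 2
      ≤ (∑ v, f v / Real.sqrt (den v)) ^ 2 := by
    exact pow_le_pow_left₀ hlb0 hsumlb 2
  refine le_trans (le_of_eq ?_) hsq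
  have hsB : Real.sqrt B ^ 2 = B := Real.sq_sqrt hBpos.le
  have hsBpos : 0 < Real.sqrt B := Real.sqrt_pos.2 hBpos
  rw [← hZ]
  have : Z * (1 + (m:ℝ) * δ) = Z^2 * B := by rw [hB]; field_simp
  rw [mul_comm Z (1 + (m:ℝ)*δ)] at this ⊢
  rw [show (1 + (m:ℝ)*δ) * Z = Z^2 * B from this]
  rw [mul_pow, div_pow, div_pow, hsB, one_pow]
  field_simp

lemma indep_le_nu (hrefl : ∀ v, adj v v) :
    ((sSup {r : ℕ | ∃ f : Fin r → V, Function.Injective f ∧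
      ∀ i j : Fin r, i ≠ j → ¬ adj (f i) (f j)} : ℕ) : ℝ) ≤
    sSup {x : ℝ | ∃ f : V → ℝ, (∀ v, 0 < f v) ∧ (∑ v, f v) = 1 ∧
      x = (∑ v, f v / Real.sqrt (∑ w ∈ Finset.univ.filter (fun w => adj w v), f w)) ^ 2} := by
  set nuset := {x : ℝ | ∃ f : V → ℝ, (∀ v, 0 < f v) ∧ (∑ v, f v) = 1 ∧
      x = (∑ v, f v / Real.sqrt (∑ w ∈ Finset.univ.filter (fun w => adj w v), f w)) ^ 2}
  have hne : {r : ℕ | ∃ f : Fin r → V, Function.Injective f ∧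
      ∀ i j : Fin r, i ≠ j → ¬ adj (f i) (f j)}.Nonempty :=
    ⟨0, Fin.elim0, fun i => i.elim0, fun i => i.elim0⟩
  set r : ℕ := sSup {r : ℕ | ∃ f : Fin r → V, Function.Injective f ∧
      ∀ i j : Fin r, i ≠ j → ¬ adj (f i) (f j)} with hrdef
  obtain ⟨e, he, hind⟩ : ∃ f : Fin r → V, Function.Injective f ∧
      ∀ i j : Fin r, i ≠ j → ¬ adj (f i) (f j) := Nat.sSup_mem hne (indep_bddAbove adj)
  rcases Nat.eq_zero_or_pos r with hr0 | hrpos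
  · rw [hr0]
    push_cast
    refine Real.sSup_nonneg fun x hx => ?_
    obtain ⟨f, -, -, rfl⟩ := hx
    exact sq_nonneg _
  · have hbdd : BddAbove nuset := ⟨_, fun x hx => nu_elem_le adj hrefl hx⟩
    set m : ℝ := ((Finset.univ \ Finset.image e Finset.univ).card : ℝ) with hm
    have key : ∀ n : ℕ,
        (r : ℝ)^2 / (((r:ℝ) + m * (1/((n:ℝ)+1))) * (1 + m * (1/((n:ℝ)+1)))) ≤ sSup nuset := by
      intro n
      have hδ : (0:ℝ) < 1/((n:ℝ)+1) := by positivity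
      obtain ⟨x, hx, hlx⟩ := indep_weight adj hrefl e he hind hrpos hδ
      exact le_trans hlx (le_csSup hbdd hx)
    have hδlim : Tendsto (fun n : ℕ => 1/((n:ℝ)+1)) atTop (nhds 0) :=
      tendsto_one_div_add_atTop_nhds_zero_nat
    have h1 : Tendsto (fun n : ℕ => (r:ℝ) + m * (1/((n:ℝ)+1))) atTop (nhds ((r:ℝ) + m * 0)) :=
      tendsto_const_nhds.add (tendsto_const_nhds.mul hδlim)
    have h2 : Tendsto (fun n : ℕ => 1 + m * (1/((n:ℝ)+1))) atTop (nhds (1 + m * 0)) :=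
      tendsto_const_nhds.add (tendsto_const_nhds.mul hδlim)
    have hrne : ((r:ℝ) + m * 0) * (1 + m * 0) ≠ 0 := by
      have : (0:ℝ) < (r:ℝ) := by exact_mod_cast hrpos
      simp only [mul_zero, add_zero]
      positivity
    have h3 : Tendsto (fun n : ℕ =>
        (r : ℝ)^2 / (((r:ℝ) + m * (1/((n:ℝ)+1))) * (1 + m * (1/((n:ℝ)+1))))) atTop
        (nhds ((r:ℝ)^2 / (((r:ℝ) + m * 0) * (1 + m * 0)))) :=
      tendsto_const_nhds.div (h1.mul h2) hrne
    have hval : (r:ℝ)^2 / (((r:ℝ) + m * 0) * (1 + m * 0)) = (r:ℝ) := by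
      have : (0:ℝ) < (r:ℝ) := by exact_mod_cast hrpos
      field_simp
      simp only [mul_zero, add_zero]
      exact div_self this.ne'
    rw [← hval]
    exact le_of_tendsto h3 (Filter.Eventually.of_forall key)


end

/-- for every finite directed graph with all self-loops,
`ι(G) ≤ ν₂(G) ≤ λ(G) ≤ κ(G)`. -/
theorem graph_invariants_chain (V : Type*) [Fintype V]
    (adj : V → V → Prop) [DecidableRel adj] (hrefl : ∀ v, adj v v) :
    (indepNumber adj : ℝ) ≤ nuTwo adj ∧
      nuTwo adj ≤ (acyclicNumber adj : ℝ) ∧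
      acyclicNumber adj ≤ cliqueCoverNumber adj := by
  classical
  unfold indepNumber nuTwo acyclicNumber cliqueCoverNumber
  refine ⟨?_, ?_, ?_⟩
  · exact indep_le_nu adj hrefl
  · exact Real.sSup_le (fun x hx => nu_elem_le adj hrefl hx) (Nat.cast_nonneg _)
  · exact lam_le_kappa adj hrefl
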